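/- Let E be a real inner product space and F a real vector space. Let k be a natural number, φ : Fin k → E a linearly independent family, ψ : Fin k → F a linearly independent family, s : Fin k → ℝ with s i ≠ 0 for all i, and m : Fin k → ℝ. Define linear maps A, B : E → F by A h = ∑_i (s i · ⟪φ i, h⟫) • ψ i and B h = ∑_i (s i · m i · ⟪φ i, h⟫) • ψ i. Then for every λ ∈ ℝ: there exists h ∈ E with A h ≠ 0 and B h = λ • A h, if and only if λ = m i for some i. In other words, the generalized eigenvalues of the pencil (B, A) are exactly the values m i. -/

import Mathlib

open scoped RealInnerProductSpace

/-- **Spectral identification step in the proof of Theorem 2 (continuous observations):**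
for the operators `A h = ∑ i, (s i · ⟪φ i, h⟫) • ψ i` and
`B h = ∑ i, (s i · m i · ⟪φ i, h⟫) • ψ i` built from linearly independent families `φ`, `ψ`,
the generalized eigenvalues of the pencil `(B, A)` are exactly the values `m i`. -/
theorem stmt_18 {E F : Type*} [NormedAddCommGroup E] [InnerProductSpace ℝ E]
    [AddCommGroup F] [Module ℝ F]
    (k : ℕ) (φ : Fin k → E) (hφ : LinearIndependent ℝ φ)
    (ψ : Fin k → F) (hψ : LinearIndependent ℝ ψ)
    (s : Fin k → ℝ) (hs : ∀ i, s i ≠ 0) (m : Fin k → ℝ)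
    (A B : E →ₗ[ℝ] F)
    (hA : ∀ h : E, A h = ∑ i, (s i * ⟪φ i, h⟫) • ψ i)
    (hB : ∀ h : E, B h = ∑ i, (s i * m i * ⟪φ i, h⟫) • ψ i)
    (lam : ℝ) :
    (∃ h : E, A h ≠ 0 ∧ B h = lam • A h) ↔ ∃ i, lam = m i := by
  constructor
  · rintro ⟨h, hne, heq⟩
    by_contra hc
    push_neg at hc
    apply hne
    have key : ∑ i, (s i * (m i - lam) * ⟪φ i, h⟫) • ψ i = 0 := by
      have e : ∀ i ∈ Finset.univ, (s i * (m i - lam) * ⟪φ i, h⟫) • ψ i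
          = (s i * m i * ⟪φ i, h⟫) • ψ i - lam • ((s i * ⟪φ i, h⟫) • ψ i) := by
        intro i _
        rw [smul_smul, ← sub_smul]
        ring_nf
      rw [Finset.sum_congr rfl e, Finset.sum_sub_distrib, ← Finset.smul_sum, ← hA, ← hB,
        heq, sub_self]
    have hz := Fintype.linearIndependent_iff.mp hψ _ key
    have hinner : ∀ i, ⟪φ i, h⟫ = 0 := by
      intro i
      have := hz i
      have hml : m i - lam ≠ 0 := sub_ne_zero.mpr (fun hh => hc i hh.symm)
      have := mul_eq_zero.mp this
      rcases this with h1 | h2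
      · exact absurd (mul_eq_zero.mp h1) (by push_neg; exact ⟨hs i, hml⟩)
      · exact h2
    rw [hA]
    simp [hinner]
  · rintro ⟨i, rfl⟩
    set K := Submodule.span ℝ (φ '' {i}ᶜ) with hK
    haveI : FiniteDimensional ℝ K := FiniteDimensional.span_of_finite ℝ ((Set.toFinite _).image φ)
    set h := φ i - (K.orthogonalProjection (φ i) : E) with hh
    have hmem : h ∈ Kᗮ := Submodule.sub_starProjection_mem_orthogonal (K := K) (φ i)
    have horth : ∀ j, j ≠ i → ⟪φ j, h⟫ = 0 := fun j hj =>
      hmem (φ j) (Submodule.subset_span ⟨j, hj, rfl⟩)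
    have hne0 : h ≠ 0 := by
      intro h0
      have : φ i = (K.orthogonalProjection (φ i) : E) := by
        rwa [hh, sub_eq_zero] at h0
      have hmemK : φ i ∈ K := this ▸ (K.orthogonalProjection (φ i)).2
      exact hφ.notMem_span_image (by simp) hmemK
    have hip : ⟪φ i, h⟫ ≠ 0 := by
      have e1 : φ i = h + (K.orthogonalProjection (φ i) : E) := by rw [hh]; abel
      have e2 : ⟪((K.orthogonalProjection (φ i)) : E), h⟫ = 0 :=
        hmem _ (K.orthogonalProjection (φ i)).2
      have : ⟪φ i, h⟫ = ⟪h, h⟫ := by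
        conv_lhs => rw [e1]
        rw [inner_add_left, e2, add_zero]
      rw [this]
      exact inner_self_ne_zero.mpr hne0
    refine ⟨h, ?_, ?_⟩
    · have hAh : A h = (s i * ⟪φ i, h⟫) • ψ i := by
        rw [hA]
        rw [Finset.sum_eq_single i]
        · intro j _ hj; rw [horth j hj]; simp
        · simp
      rw [hAh]
      exact smul_ne_zero (mul_ne_zero (hs i) hip) (hψ.ne_zero i)
    · rw [hA, hB, Finset.smul_sum]
      refine Finset.sum_congr rfl fun j _ => ?_
      by_cases hj : j = i
      · subst hj; rw [smul_smul]; ring_nf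
      · rw [horth j hj]; simp
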